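/- arXiv:2506.09570 — 4 statements merged into one kernel-verified Lean document; each statement's English description precedes it below -/
import Mathlib

section
/- Let P be an L×L Hermitian positive definite complex matrix and M an L×N complex matrix. The function X ↦ log det(P + M X M^H), defined on the convex set of N×N Hermitian positive semidefinite complex matrices, is concave: for all Hermitian positive semidefinite X, Y and all t ∈ [0,1], log det(P + M(tX + (1−t)Y)M^H) ≥ t·log det(P + M X M^H) + (1−t)·log det(P + M Y M^H). -/
open Matrix
open scoped ComplexConjugate ComplexOrder

lemma psd_smul_real {n : ℕ} {X : Matrix (Fin n) (Fin n) ℂ} (hX : X.PosSemidef) {t : ℝ}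
    (ht : 0 ≤ t) : (t • X).PosSemidef := by
  have h : t • X = (t : ℂ) • X := by
    ext i j; simp [Complex.real_smul]
  rw [h]
  refine PosSemidef.of_dotProduct_mulVec_nonneg ?_ ?_
  · rw [Matrix.IsHermitian, conjTranspose_smul, hX.1.eq]
    simp
  · intro x
    rw [Matrix.smul_mulVec, dotProduct_smul, smul_eq_mul]
    exact mul_nonneg (by positivity) (hX.dotProduct_mulVec_nonneg x)


lemma pd_conj {n : ℕ} {B U : Matrix (Fin n) (Fin n) ℂ} (hB : B.PosDef)
    (hU : IsUnit U.det) : (U * B * Uᴴ).PosDef := by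
  refine PosDef.of_dotProduct_mulVec_pos (by simpa using Matrix.isHermitian_conjTranspose_mul_mul Uᴴ hB.1) (fun x hx => ?_)
  have hUH : Function.Injective (Uᴴ).mulVec := by
    rw [Matrix.mulVec_injective_iff_isUnit]
    rw [Matrix.isUnit_iff_isUnit_det, Matrix.det_conjTranspose]
    exact hU.star
  have h0 : Uᴴ *ᵥ x ≠ 0 := fun h => hx (hUH (by simpa using h))
  simpa only [star_mulVec, dotProduct_mulVec, vecMul_vecMul, conjTranspose_conjTranspose]
    using hB.dotProduct_mulVec_pos h0

open scoped MatrixOrder in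
lemma det_re_combo_ge {n : ℕ} {A B : Matrix (Fin n) (Fin n) ℂ} (hA : A.PosDef) (hB : B.PosDef)
    {t : ℝ} (ht0 : 0 ≤ t) (ht1 : t ≤ 1) :
    A.det.re ^ t * B.det.re ^ (1 - t) ≤ (t • A + (1 - t) • B).det.re := by
  classical
  set S := CFC.sqrt A with hSdef
  have hS : S.PosSemidef := (CFC.sqrt_nonneg A).posSemidef
  have hSS : S * S = A := CFC.sqrt_mul_sqrt_self A hA.posSemidef.nonneg
  have hdetA : A.det ≠ 0 := hA.det_pos.ne'
  have hdetSS : S.det * S.det = A.det := by rw [← Matrix.det_mul, hSS]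
  have hUS : IsUnit S.det :=
    isUnit_iff_ne_zero.mpr (fun h => hdetA (by rw [← hdetSS, h, zero_mul]))
  haveI : Invertible S := S.invertibleOfIsUnitDet hUS
  have hSi : (S⁻¹).IsHermitian := hS.1.inv
  have hUSi : IsUnit (S⁻¹).det := by
    rw [← Matrix.isUnit_iff_isUnit_det]
    exact (Matrix.isUnit_nonsing_inv_iff).mpr ((Matrix.isUnit_iff_isUnit_det S).mpr hUS)
  set C := S⁻¹ * B * (S⁻¹)ᴴ with hCdef
  have hC : C.PosDef := pd_conj hB hUSi
  -- S * C * S = B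
  have hSCS : S * C * S = B := by
    rw [hCdef, hSi.eq]
    rw [← Matrix.mul_assoc, ← Matrix.mul_assoc, Matrix.mul_inv_of_invertible, Matrix.one_mul,
      Matrix.mul_assoc, Matrix.inv_mul_of_invertible, Matrix.mul_one]
  -- combination identity
  have hid : t • A + (1 - t) • B = S * (t • 1 + (1 - t) • C) * S := by
    rw [Matrix.mul_add, Matrix.add_mul, Matrix.mul_smul, Matrix.mul_smul,
      Matrix.smul_mul, Matrix.smul_mul, Matrix.mul_one, hSS, hSCS]
  -- spectral theorem for C
  set mu := hC.1.eigenvalues with hmu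
  set U : Matrix (Fin n) (Fin n) ℂ := (hC.1.eigenvectorUnitary : Matrix (Fin n) (Fin n) ℂ)
    with hUdef
  have hspec : C = U * diagonal (RCLike.ofReal ∘ mu) * star U := hC.1.spectral_theorem
  have hUU : U * star U = 1 := Matrix.mem_unitaryGroup_iff.mp hC.1.eigenvectorUnitary.2
  have hdiag : t • (1 : Matrix (Fin n) (Fin n) ℂ) + (1 - t) • diagonal (RCLike.ofReal ∘ mu)
      = diagonal (fun i => ((t + (1 - t) * mu i : ℝ) : ℂ)) := by
    ext i j
    by_cases h : i = j
    · subst h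
      simp [diagonal_apply_eq, Complex.real_smul]
    · simp [diagonal_apply_ne _ h, h]
  have hD : t • (1 : Matrix (Fin n) (Fin n) ℂ) + (1 - t) • C
      = U * diagonal (fun i => ((t + (1 - t) * mu i : ℝ) : ℂ)) * star U := by
    conv_lhs => rw [hspec, ← hUU]
    rw [← hdiag, Matrix.mul_add, Matrix.add_mul, Matrix.mul_smul, Matrix.mul_smul,
      Matrix.smul_mul, Matrix.smul_mul, Matrix.mul_one]
  have hdetD : (t • (1 : Matrix (Fin n) (Fin n) ℂ) + (1 - t) • C).det
      = ((∏ i, (t + (1 - t) * mu i) : ℝ) : ℂ) := by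
    rw [hD, Matrix.det_mul_right_comm, hUU, Matrix.one_mul, Matrix.det_diagonal]
    push_cast
    rfl
  -- determinant identities
  have hdetC : C.det = ((∏ i, mu i : ℝ) : ℂ) := by
    rw [hC.1.det_eq_prod_eigenvalues]
    push_cast
    rfl
  have hdetB : B.det = A.det * ((∏ i, mu i : ℝ) : ℂ) := by
    rw [← hSCS, Matrix.det_mul, Matrix.det_mul, hdetC, ← hdetSS]
    ring
  have hcombo : (t • A + (1 - t) • B).det
      = A.det * ((∏ i, (t + (1 - t) * mu i) : ℝ) : ℂ) := by
    rw [hid, Matrix.det_mul, Matrix.det_mul, hdetD, ← hdetSS]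
    ring
  -- realness and positivity
  obtain ⟨hre, him⟩ := Complex.lt_def.mp hA.det_pos
  have hAofReal : A.det = ((A.det.re : ℝ) : ℂ) := Complex.ext rfl (by simpa using him.symm)
  set a := A.det.re with hadef
  have ha : 0 < a := by simpa using hre
  have hmupos : ∀ i, 0 < mu i := hC.eigenvalues_pos
  have hp : 0 ≤ ∏ i, mu i := Finset.prod_nonneg fun i _ => (hmupos i).le
  have hBre : B.det.re = a * ∏ i, mu i := by
    rw [hdetB, hAofReal]
    rw [← Complex.ofReal_mul, Complex.ofReal_re]
  have hcore : (t • A + (1 - t) • B).det.re = a * ∏ i, (t + (1 - t) * mu i) := by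
    rw [hcombo, hAofReal, ← Complex.ofReal_mul, Complex.ofReal_re]
  rw [hBre, hcore]
  have hkey : (∏ i, mu i) ^ (1 - t) ≤ ∏ i, (t + (1 - t) * mu i) := by
    rw [← Real.finset_prod_rpow _ _ (fun i _ => (hmupos i).le)]
    refine Finset.prod_le_prod (fun i _ => Real.rpow_nonneg (hmupos i).le _) (fun i _ => ?_)
    have := Real.geom_mean_le_arith_mean2_weighted (w₁ := t) (w₂ := 1 - t) (p₁ := 1)
      (p₂ := mu i) ht0 (by linarith) zero_le_one (hmupos i).le (by ring)
    simpa using this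
  calc a ^ t * (a * ∏ i, mu i) ^ (1 - t)
      = a ^ t * (a ^ (1 - t) * (∏ i, mu i) ^ (1 - t)) := by
        rw [Real.mul_rpow ha.le hp]
    _ = a * (∏ i, mu i) ^ (1 - t) := by
        rw [← mul_assoc, ← Real.rpow_add ha]
        norm_num
    _ ≤ a * ∏ i, (t + (1 - t) * mu i) := mul_le_mul_of_nonneg_left hkey ha.le

lemma posdef_det_re_pos {n : ℕ} {A : Matrix (Fin n) (Fin n) ℂ} (hA : A.PosDef) :
    0 < A.det.re := by
  simpa using (Complex.lt_def.mp hA.det_pos).1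

/-- Concavity of `X ↦ log det (P + M X Mᴴ)` on Hermitian PSD matrices. -/
theorem logdet_concave_on_psd (L N : ℕ) (P : Matrix (Fin L) (Fin L) ℂ)
    (M : Matrix (Fin L) (Fin N) ℂ) (hP : P.PosDef)
    (X Y : Matrix (Fin N) (Fin N) ℂ) (hX : X.PosSemidef) (hY : Y.PosSemidef)
    (t : ℝ) (ht0 : 0 ≤ t) (ht1 : t ≤ 1) :
    t * Real.log ((P + M * X * Mᴴ).det.re) + (1 - t) * Real.log ((P + M * Y * Mᴴ).det.re)
      ≤ Real.log ((P + M * (t • X + (1 - t) • Y) * Mᴴ).det.re) := by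
  have hA : (P + M * X * Mᴴ).PosDef := hP.add_posSemidef (hX.mul_mul_conjTranspose_same M)
  have hB : (P + M * Y * Mᴴ).PosDef := hP.add_posSemidef (hY.mul_mul_conjTranspose_same M)
  have hEq : P + M * (t • X + (1 - t) • Y) * Mᴴ
      = t • (P + M * X * Mᴴ) + (1 - t) • (P + M * Y * Mᴴ) := by
    rw [Matrix.mul_add, Matrix.add_mul, Matrix.mul_smul, Matrix.mul_smul,
      Matrix.smul_mul, Matrix.smul_mul, smul_add, smul_add]
    module
  have ha : 0 < (P + M * X * Mᴴ).det.re := posdef_det_re_pos hA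
  have hb : 0 < (P + M * Y * Mᴴ).det.re := posdef_det_re_pos hB
  have hkey := det_re_combo_ge hA hB ht0 ht1
  rw [hEq]
  calc t * Real.log ((P + M * X * Mᴴ).det.re) + (1 - t) * Real.log ((P + M * Y * Mᴴ).det.re)
      = Real.log ((P + M * X * Mᴴ).det.re ^ t * (P + M * Y * Mᴴ).det.re ^ (1 - t)) := by
        rw [Real.log_mul (by positivity) (by positivity), Real.log_rpow ha, Real.log_rpow hb]
    _ ≤ Real.log ((t • (P + M * X * Mᴴ) + (1 - t) • (P + M * Y * Mᴴ)).det.re) :=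
        Real.log_le_log (by positivity) hkey
end

section
/- (Optimal Lorentzian phase for one coordinate, equations (21)–(23).) Let D be an N×N Hermitian complex matrix, c ∈ ℂ^N, and define f(q) = Re(q^H D q) − 2 Re(q^H c) for q ∈ ℂ^N. Fix an index n and fix the entries q_m for all m ≠ n, and define η_n = c_n − Σ_{m≠n} D_{n,m}·q_m − (i/2)·D_{n,n} ∈ ℂ. For θ ∈ ℝ, let q(θ) be the vector obtained from q by replacing its n-th entry with (i + e^{iθ})/2. Then for every θ ∈ ℝ, f(q(θ*)) ≤ f(q(θ)), where θ* = arg(η_n); that is, over the Lorentzian set 𝒬 = { (i + e^{iθ})/2 : θ ∈ [0, 2π] }, the coordinate-restricted objective is minimized at q_n = (i + e^{i·arg(η_n)})/2. -/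
open Matrix
open scoped ComplexConjugate BigOperators

/-- Optimal Lorentzian phase for one coordinate (equations (21)–(23)): with
`f(q) = Re(qᴴ D q) - 2 Re(qᴴ c)`, `D` Hermitian, and
`η = c n - Σ_{m≠n} D n m * q m - (i/2) D n n`, the coordinate-restricted objective over the
Lorentzian set `{(i + e^{iθ})/2 : θ ∈ ℝ}` is minimized at `θ* = arg η`. -/
theorem lorentzian_phase_optimality (N : ℕ) (D : Matrix (Fin N) (Fin N) ℂ)
    (hD : D.IsHermitian) (c : Fin N → ℂ) (q : Fin N → ℂ) (n : Fin N) :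
    ∀ θ : ℝ,
      (fun v : Fin N → ℂ =>
          (∑ i, ∑ j, conj (v i) * D i j * v j).re - 2 * (∑ i, conj (v i) * c i).re)
        (Function.update q n ((Complex.I + Complex.exp (Complex.I *
          (Complex.arg (c n - (∑ m ∈ Finset.univ.erase n, D n m * q m)
            - (Complex.I / 2) * D n n) : ℝ))) / 2))
      ≤ (fun v : Fin N → ℂ =>
          (∑ i, ∑ j, conj (v i) * D i j * v j).re - 2 * (∑ i, conj (v i) * c i).re)
        (Function.update q n ((Complex.I + Complex.exp (Complex.I * (θ : ℂ))) / 2)) := by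
  intro θ
  simp only
  set s : ℂ := ∑ m ∈ Finset.univ.erase n, D n m * q m with hs
  set η : ℂ := c n - s - (Complex.I / 2) * D n n with hη
  set d : ℂ := D n n with hd
  -- diagonal entry is real
  have hdre : d = (d.re : ℂ) := by
    have h1 : star d = d := hD.apply n n
    have : (starRingEnd ℂ) d = d := h1
    exact (Complex.conj_eq_iff_re.mp this).symm
  -- splitting a sum at n
  have hsplit : ∀ f : Fin N → ℂ, (∑ i, f i) = f n + ∑ i ∈ Finset.univ.erase n, f i :=
    fun f => (Finset.add_sum_erase Finset.univ f (Finset.mem_univ n)).symm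
  -- expansion of the objective
  have hexp : ∀ w : ℂ,
      (∑ i, ∑ j, conj ((Function.update q n w) i) * D i j * (Function.update q n w) j).re
        - 2 * (∑ i, conj ((Function.update q n w) i) * c i).re
      = ((conj w * d * w).re + 2 * (conj w * s).re - 2 * (conj w * c n).re)
        + ((∑ i ∈ Finset.univ.erase n, ∑ j ∈ Finset.univ.erase n,
              conj (q i) * D i j * q j).re
           - 2 * (∑ i ∈ Finset.univ.erase n, conj (q i) * c i).re) := by
    intro w
    have hun : Function.update q n w n = w := Function.update_self n w q
    have hu : ∀ m ∈ Finset.univ.erase n, Function.update q n w m = q m := by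
      intro m hm
      exact Function.update_of_ne (Finset.ne_of_mem_erase hm) w q
    have hcross : (∑ i ∈ Finset.univ.erase n, conj (q i) * D i n * w)
        = conj (conj w * s) := by
      rw [hs, _root_.map_mul, Complex.conj_conj, map_sum, Finset.mul_sum]
      refine Finset.sum_congr rfl fun i hi => ?_
      have hDin : D i n = conj (D n i) := (hD.apply i n).symm
      rw [hDin, _root_.map_mul]
      ring
    have e1 : (∑ i, ∑ j, conj ((Function.update q n w) i) * D i j
          * (Function.update q n w) j)
        = (conj w * d * w + conj w * s + conj (conj w * s))
          + ∑ i ∈ Finset.univ.erase n, ∑ j ∈ Finset.univ.erase n,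
              conj (q i) * D i j * q j := by
      rw [hsplit]
      rw [hsplit fun j => conj ((Function.update q n w) n) * D n j
            * (Function.update q n w) j]
      have e2 : ∀ i ∈ Finset.univ.erase n,
          (∑ j, conj ((Function.update q n w) i) * D i j * (Function.update q n w) j)
          = conj (q i) * D i n * w
            + ∑ j ∈ Finset.univ.erase n, conj (q i) * D i j * q j := by
        intro i hi
        rw [hsplit fun j => conj ((Function.update q n w) i) * D i j
              * (Function.update q n w) j, hu i hi, hun]
        congr 1
        exact Finset.sum_congr rfl fun j hj => by rw [hu j hj]
      rw [Finset.sum_congr rfl e2, Finset.sum_add_distrib, hcross, hun]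
      have e3 : (∑ j ∈ Finset.univ.erase n, conj w * D n j * (Function.update q n w) j)
          = conj w * s := by
        rw [hs, Finset.mul_sum]
        refine Finset.sum_congr rfl fun j hj => ?_
        rw [hu j hj]; ring
      rw [e3, hd]
      ring
    have e4 : (∑ i, conj ((Function.update q n w) i) * c i)
        = conj w * c n + ∑ i ∈ Finset.univ.erase n, conj (q i) * c i := by
      rw [hsplit fun i => conj ((Function.update q n w) i) * c i, hun]
      congr 1
      exact Finset.sum_congr rfl fun i hi => by rw [hu i hi]
    rw [e1, e4]
    simp only [Complex.add_re, Complex.conj_re]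
    ring
  rw [hexp, hexp]
  -- the θ-dependent part
  have key : ∀ t : ℝ,
      (conj ((Complex.I + Complex.exp (Complex.I * (t : ℂ))) / 2) * d
          * ((Complex.I + Complex.exp (Complex.I * (t : ℂ))) / 2)).re
        + 2 * (conj ((Complex.I + Complex.exp (Complex.I * (t : ℂ))) / 2) * s).re
        - 2 * (conj ((Complex.I + Complex.exp (Complex.I * (t : ℂ))) / 2) * c n).re
      = (d.re / 2 + s.im - (c n).im)
        - (conj (Complex.exp (Complex.I * (t : ℂ))) * η).re := by
    intro t
    set E : ℂ := Complex.exp (Complex.I * (t : ℂ)) with hE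
    have hEnorm : E.re * E.re + E.im * E.im = 1 := by
      have h1 : ‖E‖ = 1 := by
        rw [hE, mul_comm]; exact Complex.norm_exp_ofReal_mul_I t
      have h2 : Complex.normSq E = 1 := by
        rw [← Complex.sq_norm, h1]; norm_num
      simpa [Complex.normSq_apply] using h2
    rw [hη]
    rw [hdre]
    simp only [map_div₀, map_add, Complex.conj_I, map_ofNat]
    simp only [Complex.mul_re, Complex.mul_im, Complex.add_re, Complex.add_im,
      Complex.sub_re, Complex.sub_im, Complex.div_re, Complex.div_im, Complex.I_re,
      Complex.I_im, Complex.ofReal_re, Complex.ofReal_im, Complex.conj_re, Complex.conj_im,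
      Complex.normSq_apply, Complex.neg_re, Complex.neg_im, Complex.re_ofNat, Complex.im_ofNat]
    linear_combination (d.re / 4) * hEnorm
  rw [key θ, key (Complex.arg η)]
  have hfin : (conj (Complex.exp (Complex.I * (Complex.arg η : ℂ))) * η).re
      = ‖η‖ := by
    have h2 : (starRingEnd ℂ) (Complex.exp (Complex.I * (Complex.arg η : ℂ)))
        = Complex.exp (-(Complex.I * (Complex.arg η : ℂ))) := by
      rw [← Complex.exp_conj]
      congr 1
      simp [Complex.conj_ofReal]
    have h3 : Complex.exp (-(Complex.I * (Complex.arg η : ℂ)))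
        * Complex.exp ((Complex.arg η : ℂ) * Complex.I) = 1 := by
      rw [← Complex.exp_add,
        show -(Complex.I * (Complex.arg η : ℂ)) + (Complex.arg η : ℂ) * Complex.I = 0 by ring,
        Complex.exp_zero]
    have h4 : conj (Complex.exp (Complex.I * (Complex.arg η : ℂ))) * η
        = ((‖η‖ : ℝ) : ℂ) := by
      calc conj (Complex.exp (Complex.I * (Complex.arg η : ℂ))) * η
          = Complex.exp (-(Complex.I * (Complex.arg η : ℂ)))
            * (((‖η‖ : ℝ) : ℂ) * Complex.exp ((Complex.arg η : ℂ) * Complex.I)) := by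
            rw [h2, Complex.norm_mul_exp_arg_mul_I η]
        _ = ((‖η‖ : ℝ) : ℂ)
            * (Complex.exp (-(Complex.I * (Complex.arg η : ℂ)))
               * Complex.exp ((Complex.arg η : ℂ) * Complex.I)) := by ring
        _ = ((‖η‖ : ℝ) : ℂ) := by rw [h3, mul_one]
    rw [h4, Complex.ofReal_re]
  have hle : (conj (Complex.exp (Complex.I * (θ : ℂ))) * η).re ≤ ‖η‖ := by
    have h1 := Complex.re_le_norm (conj (Complex.exp (Complex.I * (θ : ℂ))) * η)
    have h2 : ‖conj (Complex.exp (Complex.I * (θ : ℂ))) * η‖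
        = ‖η‖ := by
      rw [norm_mul, Complex.norm_conj, mul_comm Complex.I, Complex.norm_exp_ofReal_mul_I,
        one_mul]
    linarith [h1, h2.le, h2.ge]
  rw [hfin]
  linarith
end

section
/- (Per-user fractional-programming identity underlying Theorem 3/Theorem 4.) Let m, K be positive integers, u_1, …, u_K ∈ ℂ^m, N > 0 a real number, and fix k ∈ {1,…,K}. For ρ > −1 and γ ∈ ℂ^m define F(ρ, γ) = log(1 + ρ) − ρ + (1 + ρ)·[ 2 Re(γ^H u_k) − (Σ_{i=1}^K ‖u_i‖² + N)·‖γ‖² ]. Then F(ρ, γ) ≤ log(1 + ‖u_k‖²/(Σ_{i≠k} ‖u_i‖² + N)) for all ρ > −1 and γ ∈ ℂ^m, with equality if and only if γ = u_k/(Σ_{i=1}^K ‖u_i‖² + N) and ρ = ‖u_k‖²/(Σ_{i≠k} ‖u_i‖² + N). -/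
open scoped ComplexConjugate BigOperators

/-- Per-user fractional-programming identity underlying Theorems 3/4: with
`F(ρ,γ) = log(1+ρ) - ρ + (1+ρ)[2 Re(γᴴ u_k) - (Σᵢ‖uᵢ‖² + N)‖γ‖²]`, one has
`F(ρ,γ) ≤ log(1 + ‖u_k‖²/(Σ_{i≠k}‖uᵢ‖² + N))`, with equality iff
`γ = u_k/(Σᵢ‖uᵢ‖² + N)` and `ρ = ‖u_k‖²/(Σ_{i≠k}‖uᵢ‖² + N)`. -/
theorem per_user_fp_identity (m K : ℕ) (u : Fin K → Fin m → ℂ) (N : ℝ) (hN : 0 < N)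
    (k : Fin K) :
    ∀ (ρ : ℝ), -1 < ρ → ∀ γ : Fin m → ℂ,
      (Real.log (1 + ρ) - ρ + (1 + ρ) *
          (2 * (∑ n, conj (γ n) * u k n).re
            - ((∑ i, ∑ n, ‖u i n‖ ^ 2) + N) * ∑ n, ‖γ n‖ ^ 2)
        ≤ Real.log (1 + (∑ n, ‖u k n‖ ^ 2)
            / ((∑ i ∈ Finset.univ.erase k, ∑ n, ‖u i n‖ ^ 2) + N))) ∧
      (Real.log (1 + ρ) - ρ + (1 + ρ) *
          (2 * (∑ n, conj (γ n) * u k n).re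
            - ((∑ i, ∑ n, ‖u i n‖ ^ 2) + N) * ∑ n, ‖γ n‖ ^ 2)
        = Real.log (1 + (∑ n, ‖u k n‖ ^ 2)
            / ((∑ i ∈ Finset.univ.erase k, ∑ n, ‖u i n‖ ^ 2) + N))
       ↔ (γ = fun n => u k n / ((((∑ i, ∑ n, ‖u i n‖ ^ 2) + N : ℝ)) : ℂ)) ∧
         ρ = (∑ n, ‖u k n‖ ^ 2)
            / ((∑ i ∈ Finset.univ.erase k, ∑ n, ‖u i n‖ ^ 2) + N)) := by
  intro ρ hρ γ
  have hSsplit : (∑ i, ∑ n, ‖u i n‖ ^ 2)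
      = (∑ i ∈ Finset.univ.erase k, ∑ n, ‖u i n‖ ^ 2)
        + ∑ n, ‖u k n‖ ^ 2 :=
    (Finset.sum_erase_add _ _ (Finset.mem_univ k)).symm
  rw [hSsplit]
  set A := ∑ n, ‖u k n‖ ^ 2 with hAdef
  set B := ∑ i ∈ Finset.univ.erase k, ∑ n, ‖u i n‖ ^ 2 with hBdef
  have hA0 : 0 ≤ A := Finset.sum_nonneg fun n _ => sq_nonneg _
  have hB0 : 0 ≤ B := Finset.sum_nonneg fun i _ => Finset.sum_nonneg fun n _ => sq_nonneg _
  set D := B + N with hDdef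
  set T := B + A + N with hTdef
  have hD : 0 < D := by rw [hDdef]; linarith
  have hT : 0 < T := by rw [hTdef]; linarith
  have hTD : T = A + D := by rw [hTdef, hDdef]; ring
  have hx : 0 < 1 + ρ := by linarith
  set E := ∑ n, ‖γ n - u k n / (T : ℂ)‖ ^ 2 with hEdef
  have hE0 : 0 ≤ E := Finset.sum_nonneg fun n _ => sq_nonneg _
  clear_value A B D T E
  -- completing the square in γ
  have hterm : ∀ n, 2 * ((conj (γ n) * u k n).re) - T * ‖γ n‖ ^ 2
      = ‖u k n‖ ^ 2 / T - T * ‖γ n - u k n / (T : ℂ)‖ ^ 2 := by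
    intro n
    have hT' : T ≠ 0 := hT.ne'
    simp only [Complex.sq_norm, Complex.normSq_apply, Complex.mul_re, Complex.conj_re,
      Complex.conj_im, Complex.sub_re, Complex.sub_im, Complex.div_re, Complex.div_im,
      Complex.ofReal_re, Complex.ofReal_im, Complex.normSq_ofReal]
    field_simp
    ring
  have hkey : 2 * (∑ n, conj (γ n) * u k n).re - T * ∑ n, ‖γ n‖ ^ 2
      = A / T - T * E := by
    rw [Complex.re_sum, Finset.mul_sum, Finset.mul_sum, ← Finset.sum_sub_distrib,
      hAdef, hEdef, Finset.sum_div, Finset.mul_sum, ← Finset.sum_sub_distrib]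
    exact Finset.sum_congr rfl fun n _ => hterm n
  rw [hkey]
  -- the RHS constant
  have hRHS : 1 + A / D = T / D := by
    rw [hTD]; field_simp; ring
  rw [hRHS]
  set t := (1 + ρ) * D / T with htdef
  clear_value t
  have ht : 0 < t := by rw [htdef]; exact div_pos (mul_pos hx hD) hT
  have hlog : Real.log t = Real.log (1 + ρ) - Real.log (T / D) := by
    rw [htdef, Real.log_div (mul_pos hx hD).ne' hT.ne', Real.log_mul hx.ne' hD.ne',
      Real.log_div hT.ne' hD.ne']
    ring
  have harith : -ρ + (1 + ρ) * (A / T - T * E) = (1 - t) - (1 + ρ) * T * E := by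
    have hArw : A = T - D := by rw [hTD]; ring
    rw [htdef, hArw]
    field_simp
    ring
  have hlog_le : Real.log t ≤ t - 1 := Real.log_le_sub_one_of_pos ht
  have hpen0 : 0 ≤ (1 + ρ) * T * E := mul_nonneg (mul_nonneg hx.le hT.le) hE0
  constructor
  · linarith
  constructor
  · intro heq
    have h1 : Real.log t = t - 1 := by linarith
    have hpen : (1 + ρ) * T * E = 0 := by linarith
    have ht1 : t = 1 := by
      by_contra hne
      exact absurd h1 (Real.log_lt_sub_one_of_pos ht hne).ne
    have hE : E = 0 := by
      rcases mul_eq_zero.mp hpen with h | h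
      · exact absurd h (mul_pos hx hT).ne'
      · exact h
    constructor
    · rw [hEdef] at hE
      funext n
      have hn := (Finset.sum_eq_zero_iff_of_nonneg
        (fun i _ => sq_nonneg (‖γ i - u k i / (T : ℂ)‖))).mp hE n (Finset.mem_univ n)
      simpa [sub_eq_zero] using hn
    · -- ρ = A / D
      have hrho : (1 + ρ) * D = T := by
        have : (1 + ρ) * D / T = 1 := by rw [← htdef]; exact ht1
        field_simp at this
        linarith [this]
      rw [hTD] at hrho
      rw [eq_div_iff hD.ne']
      nlinarith [hrho]
  · rintro ⟨hγ, hρeq⟩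
    have hE : E = 0 := by
      rw [hEdef, hγ]
      simp
    have hpen : (1 + ρ) * T * E = 0 := by rw [hE]; ring
    have ht1 : t = 1 := by
      rw [htdef, hρeq, hTD]
      field_simp
      ring
    have hlog1 : Real.log t = 0 := by rw [ht1]; exact Real.log_one
    linarith
end

section
/- (Theorem 4, pointwise form: equivalence of the downlink problem and its FP reformulation.) Let H be an N×N complex matrix, and for k = 1,…,K let G̃_k be an N×M complex matrix and N_k > 0. Let Q be an N×L complex matrix and W = [w_1, …, w_K] an L×K complex matrix. Define R̃_d(Q, W) = Σ_{k=1}^K log(1 + ‖G̃_k^H H Q w_k‖² / (Σ_{i≠k} ‖G̃_k^H H Q w_i‖² + N_k)), and for ρ = (ρ_1,…,ρ_K) with each ρ_k > −1 and Γ = (γ_1,…,γ_K) with γ_k ∈ ℂ^M, define F_1(Q, W, ρ, Γ) = Σ_{k=1}^K [ log(1 + ρ_k) − ρ_k + (1 + ρ_k)·𝒜_k ] where 𝒜_k = 2 Re(γ_k^H G̃_k^H H Q w_k) − (Σ_{i=1}^K ‖G̃_k^H H Q w_i‖² + N_k)·‖γ_k‖². Then F_1(Q, W, ρ, Γ) ≤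 R̃_d(Q, W) for all admissible (ρ, Γ), with equality if and only if for every k, γ_k = (Σ_{i=1}^K ‖G̃_k^H H Q w_i‖² + N_k)^{-1}·G̃_k^H H Q w_k and ρ_k = ‖G̃_k^H H Q w_k‖² / (Σ_{i≠k} ‖G̃_k^H H Q w_i‖² + N_k). In particular, the supremum of F_1 over (ρ, Γ) equals R̃_d(Q, W), so the two optimization problems have the same optimal value and the same optimal (Q, W) over any constraint set on (Q, W). -/
open Matrix
open scoped ComplexConjugate BigOperators

lemma sq_abs_expand (T : ℝ) (g v : ℂ) :
    ‖(T:ℂ)*g - v‖^2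
      = T^2 * ‖g‖ ^2 - 2*T*((conj g) * v).re + ‖v‖ ^2 := by
  simp [Complex.sq_norm, Complex.normSq_apply, Complex.mul_re, Complex.mul_im]
  ring

lemma A_eq {M : ℕ} (T : ℝ) (hT : 0 < T) (γ u : Fin M → ℂ) :
    2 * (∑ j, conj (γ j) * u j).re - T * ∑ j, ‖γ j‖ ^2
    = ((∑ j, ‖u j‖^2) - ∑ j, ‖(T:ℂ)*γ j - u j‖^2) / T := by
  have h1 : ∑ j, ‖(T:ℂ)*γ j - u j‖^2
      = T^2 * (∑ j, ‖γ j‖^2)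
        - 2*T*(∑ j, ((conj (γ j)) * u j).re) + ∑ j, ‖u j‖^2 := by
    rw [Finset.mul_sum, Finset.mul_sum]
    rw [← Finset.sum_sub_distrib, ← Finset.sum_add_distrib]
    exact Finset.sum_congr rfl fun j _ => sq_abs_expand T (γ j) (u j)
  rw [Complex.re_sum, eq_div_iff hT.ne']
  linear_combination h1

lemma scalar_key (s d e ρ : ℝ) (hs : 0 ≤ s) (hd : 0 < d) (he : 0 ≤ e) (hρ : -1 < ρ) :
    (Real.log (1+ρ) - ρ + (1+ρ) * ((s - e)/(s+d)) ≤ Real.log (1 + s/d)) ∧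
    (Real.log (1+ρ) - ρ + (1+ρ) * ((s - e)/(s+d)) = Real.log (1 + s/d) ↔ e = 0 ∧ ρ = s/d) := by
  have ht : 0 < s + d := by linarith
  have h1ρ : 0 < 1 + ρ := by linarith
  set x := (1+ρ)*d/(s+d) with hx
  have hx0 : 0 < x := by positivity
  have hlogx : Real.log x = Real.log (1+ρ) + Real.log d - Real.log (s+d) := by
    rw [hx, Real.log_div (by positivity) ht.ne', Real.log_mul h1ρ.ne' hd.ne']
  have hlogsd : Real.log (1 + s/d) = Real.log (s+d) - Real.log d := by
    rw [show (1 + s/d) = (s+d)/d by field_simp; ring, Real.log_div ht.ne' hd.ne']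
  have hident : Real.log (1+ρ) - ρ + (1+ρ)*((s-e)/(s+d))
      = (Real.log x - x + 1) + Real.log (1+s/d) - (1+ρ)*(e/(s+d)) := by
    rw [hlogx, hlogsd, hx]; field_simp; ring
  have hlog : Real.log x ≤ x - 1 := Real.log_le_sub_one_of_pos hx0
  have hterm : 0 ≤ (1+ρ)*(e/(s+d)) := by positivity
  constructor
  · rw [hident]; linarith
  · constructor
    · intro heq
      rw [hident] at heq
      have h1' : Real.log x - x + 1 = 0 := by linarith
      have h2' : (1+ρ)*(e/(s+d)) = 0 := by linarith
      have hx1 : x = 1 := by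
        by_contra hne
        have := Real.log_lt_sub_one_of_pos hx0 hne
        linarith
      have he0' : e = 0 := by
        rcases mul_eq_zero.mp h2' with h | h
        · linarith
        · rcases div_eq_zero_iff.mp h with h' | h'
          · exact h'
          · linarith
      refine ⟨he0', ?_⟩
      rw [hx, div_eq_one_iff_eq ht.ne'] at hx1
      rw [eq_div_iff hd.ne']
      linear_combination hx1
    · rintro ⟨he0, hρeq⟩
      subst he0
      have hx1 : x = 1 := by
        rw [hx, hρeq, div_eq_one_iff_eq ht.ne']; field_simp; ring
      rw [hident, hx1]
      simp

set_option maxHeartbeats 1000000 in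
/-- Theorem 4 (pointwise form): equivalence of the downlink problem and its
fractional-programming reformulation. With `u k i = G̃ₖᴴ H Q wᵢ`, the FP surrogate `F₁`
satisfies `F₁(Q,W,ρ,Γ) ≤ R̃_d(Q,W)` for all admissible `(ρ,Γ)`, with equality iff the
auxiliary variables take their optimal values; in particular the supremum of `F₁` over
`(ρ,Γ)` is attained and equals `R̃_d(Q,W)`. -/
theorem downlink_fp_equivalence (N L M K : ℕ) (H : Matrix (Fin N) (Fin N) ℂ)
    (Gt : Fin K → Matrix (Fin N) (Fin M) ℂ) (Nk : Fin K → ℝ) (hNk : ∀ k, 0 < Nk k)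
    (Q : Matrix (Fin N) (Fin L) ℂ) (w : Fin K → Fin L → ℂ) :
    let u : Fin K → Fin K → Fin M → ℂ := fun k i => ((Gt k)ᴴ * H * Q).mulVec (w i)
    let Rd : ℝ := ∑ k, Real.log (1 + (∑ j, ‖u k k j‖ ^ 2)
        / ((∑ i ∈ Finset.univ.erase k, ∑ j, ‖u k i j‖ ^ 2) + Nk k))
    let F1 : (Fin K → ℝ) → (Fin K → Fin M → ℂ) → ℝ := fun ρ Γ =>
      ∑ k, (Real.log (1 + ρ k) - ρ k + (1 + ρ k) *
        (2 * (∑ j, conj (Γ k j) * u k k j).re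
          - ((∑ i, ∑ j, ‖u k i j‖ ^ 2) + Nk k)
            * ∑ j, ‖Γ k j‖ ^ 2))
    (∀ (ρ : Fin K → ℝ) (Γ : Fin K → Fin M → ℂ), (∀ k, -1 < ρ k) → F1 ρ Γ ≤ Rd) ∧
    (∀ (ρ : Fin K → ℝ) (Γ : Fin K → Fin M → ℂ), (∀ k, -1 < ρ k) →
      (F1 ρ Γ = Rd ↔ ∀ k,
        (Γ k = fun j =>
          u k k j / ((((∑ i, ∑ j, ‖u k i j‖ ^ 2) + Nk k : ℝ)) : ℂ)) ∧
        ρ k = (∑ j, ‖u k k j‖ ^ 2)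
          / ((∑ i ∈ Finset.univ.erase k, ∑ j, ‖u k i j‖ ^ 2) + Nk k))) ∧
    (∃ (ρ : Fin K → ℝ) (Γ : Fin K → Fin M → ℂ), (∀ k, -1 < ρ k) ∧ F1 ρ Γ = Rd) := by
  intro u Rd F1
  -- basic quantities
  set S : Fin K → ℝ := fun k => ∑ j, ‖u k k j‖ ^ 2 with hSdef
  set D : Fin K → ℝ := fun k =>
    (∑ i ∈ Finset.univ.erase k, ∑ j, ‖u k i j‖ ^ 2) + Nk k with hDdef
  have hS0 : ∀ k, 0 ≤ S k := fun k => Finset.sum_nonneg fun j _ => by positivity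
  have hD0 : ∀ k, 0 < D k := by
    intro k
    have h1 : 0 ≤ ∑ i ∈ Finset.univ.erase k, ∑ j, ‖u k i j‖ ^ 2 :=
      Finset.sum_nonneg fun i _ => Finset.sum_nonneg fun j _ => by positivity
    have := hNk k
    simp only [hDdef]
    linarith
  have hT0 : ∀ k, 0 < S k + D k := fun k => by linarith [hS0 k, hD0 k]
  have hTsum : ∀ k, (∑ i, ∑ j, ‖u k i j‖ ^ 2) + Nk k = S k + D k := by
    intro k
    have h := Finset.sum_erase_add Finset.univ
      (fun i => ∑ j, ‖u k i j‖ ^ 2) (Finset.mem_univ k)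
    simp only [hSdef, hDdef]
    linarith
  have hTC : ∀ k, ((S k + D k : ℝ) : ℂ) ≠ 0 := fun k =>
    Complex.ofReal_ne_zero.mpr (hT0 k).ne'
  -- error term
  set E : Fin K → (Fin K → Fin M → ℂ) → ℝ := fun k Γ =>
    ∑ j, ‖((S k + D k : ℝ) : ℂ) * Γ k j - u k k j‖ ^ 2 with hEdef
  have hE0 : ∀ k Γ, 0 ≤ E k Γ := fun k Γ => Finset.sum_nonneg fun j _ => by positivity
  -- rewrite each F1 summand
  have hA : ∀ (Γ : Fin K → Fin M → ℂ) (k : Fin K),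
      2 * (∑ j, conj (Γ k j) * u k k j).re
        - ((∑ i, ∑ j, ‖u k i j‖ ^ 2) + Nk k) * ∑ j, ‖Γ k j‖ ^ 2
      = (S k - E k Γ) / (S k + D k) := by
    intro Γ k
    rw [hTsum k]
    exact A_eq (S k + D k) (hT0 k) (Γ k) (u k k)
  -- per-k key fact
  have key : ∀ (ρ : Fin K → ℝ) (Γ : Fin K → Fin M → ℂ), (∀ k, -1 < ρ k) → ∀ k : Fin K,
      (Real.log (1 + ρ k) - ρ k + (1 + ρ k) *
        (2 * (∑ j, conj (Γ k j) * u k k j).re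
          - ((∑ i, ∑ j, ‖u k i j‖ ^ 2) + Nk k) * ∑ j, ‖Γ k j‖ ^ 2)
        ≤ Real.log (1 + S k / D k)) ∧
      (Real.log (1 + ρ k) - ρ k + (1 + ρ k) *
        (2 * (∑ j, conj (Γ k j) * u k k j).re
          - ((∑ i, ∑ j, ‖u k i j‖ ^ 2) + Nk k) * ∑ j, ‖Γ k j‖ ^ 2)
        = Real.log (1 + S k / D k) ↔ E k Γ = 0 ∧ ρ k = S k / D k) := by
    intro ρ Γ hρ k
    rw [hA Γ k]
    exact scalar_key (S k) (D k) (E k Γ) (ρ k) (hS0 k) (hD0 k) (hE0 k Γ) (hρ k)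
  -- E = 0 iff Γ k takes its optimal value
  have hEzero : ∀ (Γ : Fin K → Fin M → ℂ) (k : Fin K),
      E k Γ = 0 ↔ Γ k = fun j =>
        u k k j / ((((∑ i, ∑ j, ‖u k i j‖ ^ 2) + Nk k : ℝ)) : ℂ) := by
    intro Γ k
    rw [hTsum k]
    constructor
    · intro hE
      have hall := (Finset.sum_eq_zero_iff_of_nonneg
        (fun j _ => by positivity)).mp hE
      funext j
      have hj := hall j (Finset.mem_univ j)
      have : ((S k + D k : ℝ) : ℂ) * Γ k j - u k k j = 0 := by
        have habs : ‖((S k + D k : ℝ) : ℂ) * Γ k j - u k k j‖ = 0 := by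
          nlinarith [norm_nonneg (((S k + D k : ℝ) : ℂ) * Γ k j - u k k j)]
        exact norm_eq_zero.mp habs
      rw [eq_div_iff (hTC k)]
      linear_combination this
    · intro hΓ
      simp only [hEdef]
      apply Finset.sum_eq_zero
      intro j _
      rw [hΓ]
      rw [mul_div_assoc']
      rw [mul_comm, mul_div_assoc, div_self (hTC k), mul_one, sub_self]
      simp
  -- assemble
  refine ⟨?_, ?_, ?_⟩
  · intro ρ Γ hρ
    exact Finset.sum_le_sum fun k _ => (key ρ Γ hρ k).1
  · intro ρ Γ hρ
    rw [Finset.sum_eq_sum_iff_of_le fun k _ => (key ρ Γ hρ k).1]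
    constructor
    · intro h k
      have := (key ρ Γ hρ k).2.mp (h k (Finset.mem_univ k))
      exact ⟨(hEzero Γ k).mp this.1, this.2⟩
    · intro h k _
      exact (key ρ Γ hρ k).2.mpr ⟨(hEzero Γ k).mpr (h k).1, (h k).2⟩
  · set ρ0 : Fin K → ℝ := fun k => S k / D k with hρ0def
    set Γ0 : Fin K → Fin M → ℂ := fun k j =>
      u k k j / ((((∑ i, ∑ j, ‖u k i j‖ ^ 2) + Nk k : ℝ)) : ℂ) with hΓ0def
    have hρ : ∀ k, -1 < ρ0 k := by
      intro k
      have : 0 ≤ S k / D k := div_nonneg (hS0 k) (hD0 k).le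
      simp only [hρ0def]
      linarith
    refine ⟨ρ0, Γ0, hρ, ?_⟩
    have h : ∑ k, (Real.log (1 + ρ0 k) - ρ0 k + (1 + ρ0 k) *
        (2 * (∑ j, conj (Γ0 k j) * u k k j).re
          - ((∑ i, ∑ j, ‖u k i j‖ ^ 2) + Nk k)
            * ∑ j, ‖Γ0 k j‖ ^ 2))
        = ∑ k, Real.log (1 + (∑ j, ‖u k k j‖ ^ 2)
        / ((∑ i ∈ Finset.univ.erase k, ∑ j, ‖u k i j‖ ^ 2) + Nk k)) :=
      (Finset.sum_eq_sum_iff_of_le fun k _ => (key ρ0 Γ0 hρ k).1).mpr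
        fun k _ => (key ρ0 Γ0 hρ k).2.mpr ⟨(hEzero Γ0 k).mpr rfl, rfl⟩
    exact h
end
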